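/- For every M ≥ δ > 0 there exist ρ ∈ (0,1), c₀ > 0 and C > 0, depending only on M and δ, with the following property. Let h be holomorphic on the unit disc D(0,1) ⊂ ℂ, even (h(−z) = h(z)), real-valued on (−1,1), with |h(z)| ≤ M on D(0,1), h″(0) ≥ δ, and −c₀ < h(0) < 0. Then there exist a real number ε_c ∈ (0, ρ) with ε_c² ≤ C·|h(0)|, and a holomorphic function m on D(0,ρ), real-valued and strictly positive on (−ρ, ρ), such that h(ε) = m(ε)·(ε² − ε_c²) for all ε ∈ D(0,ρ). In particular, the only zeros of h in D(0,ρ) are the two simple real zeros ±ε_c. -/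

import Mathlib

open Metric Set Filter Complex Topology

lemma aux_cauchy {f : ℂ → ℂ} {r t K : ℝ} (ht : 0 < t) (hrt : r + t < 1)
    (hf : DifferentiableOn ℂ f (Metric.ball 0 1))
    (hK : ∀ w ∈ Metric.closedBall (0:ℂ) (r + t), ‖f w‖ ≤ K) :
    ∀ z ∈ Metric.closedBall (0:ℂ) r, ‖deriv f z‖ ≤ K / t := by
  intro z hz
  rw [mem_closedBall_zero_iff] at hz
  have hsub : Metric.closedBall z t ⊆ Metric.closedBall (0:ℂ) (r + t) := by
    intro w hw
    rw [mem_closedBall_zero_iff]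
    rw [mem_closedBall] at hw
    calc ‖w‖ = ‖w - z + z‖ := by ring_nf
    _ ≤ ‖w - z‖ + ‖z‖ := norm_add_le _ _
    _ ≤ t + r := by
        have : ‖w - z‖ = dist w z := by rw [dist_eq_norm]
        rw [this]; linarith
    _ = r + t := by ring
  have hsub2 : Metric.closedBall (0:ℂ) (r+t) ⊆ Metric.ball (0:ℂ) 1 :=
    closedBall_subset_ball hrt
  refine Complex.norm_deriv_le_of_forall_mem_sphere_norm_le ht ?_ ?_
  · refine DifferentiableOn.diffContOnCl ?_
    rw [closure_ball _ ht.ne']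
    exact hf.mono (hsub.trans hsub2)
  · intro w hw
    exact hK w (hsub (sphere_subset_closedBall hw))

lemma aux_im_deriv {e : ℂ → ℂ} {e' : ℂ} {z : ℝ} (h : HasDerivAt e e' ↑z) :
    HasDerivAt (fun x : ℝ => (e ↑x).im) e'.im z := by
  have A : HasFDerivAt ((↑) : ℝ → ℂ) Complex.ofRealCLM z := Complex.ofRealCLM.hasFDerivAt
  have B : HasFDerivAt e ((ContinuousLinearMap.smulRight 1 e' : ℂ →L[ℂ] ℂ).restrictScalars ℝ)
      (Complex.ofRealCLM z) := h.hasFDerivAt.restrictScalars ℝ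
  have C : HasFDerivAt Complex.im Complex.imCLM (e (Complex.ofRealCLM z)) :=
    Complex.imCLM.hasFDerivAt
  convert (C.comp z (B.comp z A)).hasDerivAt
  case e'_4 | e'_5 | e'_8 => rfl
  rw [ContinuousLinearMap.comp_apply, ContinuousLinearMap.comp_apply]
  simp

lemma aux_real_deriv {f : ℂ → ℂ} (hf : DifferentiableOn ℂ f (Metric.ball 0 1))
    (hre : ∀ x : ℝ, |x| < 1 → (f ↑x).im = 0) :
    ∀ x : ℝ, |x| < 1 → (deriv f ↑x).im = 0 := by
  intro x hx
  have hxball : (x:ℂ) ∈ Metric.ball (0:ℂ) 1 := by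
    rw [mem_ball_zero_iff, Complex.norm_real, Real.norm_eq_abs]; exact hx
  have hdat : HasDerivAt f (deriv f ↑x) ↑x :=
    (hf.differentiableAt (isOpen_ball.mem_nhds hxball)).hasDerivAt
  have h1 : HasDerivAt (fun t : ℝ => (f ↑t).im) (deriv f ↑x).im x := aux_im_deriv hdat
  have h2 : (fun t : ℝ => (f ↑t).im) =ᶠ[nhds x] fun _ => (0:ℝ) := by
    have habs := abs_lt.mp hx
    filter_upwards [Ioo_mem_nhds habs.1 habs.2] with t ht
    exact hre t (abs_lt.mpr ⟨ht.1, ht.2⟩)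
  have h3 := h2.deriv_eq
  rw [h1.deriv, deriv_const] at h3
  exact h3

set_option maxHeartbeats 4000000 in
/-- For every `M ≥ δ > 0` there are `ρ ∈ (0,1)`, `c₀ > 0`, `C > 0`
(depending only on `M, δ`) such that any `h` holomorphic on the unit disc, even,
real-valued on `(−1,1)`, bounded by `M`, with `h″(0) ≥ δ` and `−c₀ < h(0) < 0`,
factors as `h(ε) = m(ε)·(ε² − ε_c²)` on `D(0,ρ)` with `ε_c ∈ (0,ρ)` real,
`ε_c² ≤ C·|h(0)|`, and `m` holomorphic on `D(0,ρ)`, real and strictly positive on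
`(−ρ,ρ)`; in particular the only zeros of `h` in `D(0,ρ)` are the two simple real
zeros `±ε_c`. -/
theorem stmt_2 (M δ : ℝ) (hδ : 0 < δ) (hMδ : δ ≤ M) :
    ∃ ρ c₀ C : ℝ, 0 < ρ ∧ ρ < 1 ∧ 0 < c₀ ∧ 0 < C ∧
      ∀ h : ℂ → ℂ,
        DifferentiableOn ℂ h (Metric.ball 0 1) →
        (∀ z ∈ Metric.ball (0:ℂ) 1, h (-z) = h z) →
        (∀ x : ℝ, |x| < 1 → (h (x:ℂ)).im = 0) →
        (∀ z ∈ Metric.ball (0:ℂ) 1, ‖h z‖ ≤ M) →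
        δ ≤ (deriv (deriv h) 0).re →
        -c₀ < (h 0).re → (h 0).re < 0 →
        ∃ εc : ℝ, 0 < εc ∧ εc < ρ ∧ εc ^ 2 ≤ C * ‖h 0‖ ∧
          ∃ m : ℂ → ℂ, DifferentiableOn ℂ m (Metric.ball 0 ρ) ∧
            (∀ x : ℝ, |x| < ρ → (m (x:ℂ)).im = 0 ∧ 0 < (m (x:ℂ)).re) ∧
            (∀ z ∈ Metric.ball (0:ℂ) ρ, h z = m z * (z ^ 2 - (εc:ℂ) ^ 2)) ∧
            (∀ z ∈ Metric.ball (0:ℂ) ρ, h z = 0 ↔ z = (εc:ℂ) ∨ z = -(εc:ℂ)) ∧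
            deriv h (εc:ℂ) ≠ 0 ∧ deriv h (-(εc:ℂ)) ≠ 0 := by
  have hM : 0 < M := lt_of_lt_of_le hδ hMδ
  set ρ : ℝ := δ / (8000 * M) with hρdef
  have hρpos : 0 < ρ := by positivity
  have hρM : 8000 * M * ρ = δ := by
    rw [hρdef]; field_simp
  have hρle : ρ ≤ 1 / 8000 := by
    rw [hρdef, div_le_div_iff₀ (by positivity) (by norm_num)]
    nlinarith
  refine ⟨ρ, δ/8 * (ρ/4)^2, 4/δ, hρpos, by linarith, by positivity, by positivity, ?_⟩
  intro h hd heven hre hbM hsnd hclow hchigh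
  -- analyticity and derivatives
  have han : AnalyticOnNhd ℂ h (Metric.ball 0 1) := hd.analyticOnNhd isOpen_ball
  set h1 : ℂ → ℂ := deriv h with hh1
  set h2 : ℂ → ℂ := deriv h1 with hh2
  set h3 : ℂ → ℂ := deriv h2 with hh3
  have han1 : AnalyticOnNhd ℂ h1 (Metric.ball 0 1) := han.deriv
  have han2 : AnalyticOnNhd ℂ h2 (Metric.ball 0 1) := han1.deriv
  have dOn1 : DifferentiableOn ℂ h1 (Metric.ball 0 1) := han1.differentiableOn
  have dOn2 : DifferentiableOn ℂ h2 (Metric.ball 0 1) := han2.differentiableOn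
  have dAt : ∀ z ∈ Metric.ball (0:ℂ) 1, HasDerivAt h (h1 z) z := fun z hz =>
    (hd.differentiableAt (isOpen_ball.mem_nhds hz)).hasDerivAt
  have dAt1 : ∀ z ∈ Metric.ball (0:ℂ) 1, HasDerivAt h1 (h2 z) z := fun z hz =>
    (dOn1.differentiableAt (isOpen_ball.mem_nhds hz)).hasDerivAt
  have dAt2 : ∀ z ∈ Metric.ball (0:ℂ) 1, HasDerivAt h2 (h3 z) z := fun z hz =>
    (dOn2.differentiableAt (isOpen_ball.mem_nhds hz)).hasDerivAt
  -- Cauchy chain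
  have hbM' : ∀ w ∈ Metric.closedBall (0:ℂ) (17/20 + 1/10), ‖h w‖ ≤ M := by
    intro w hw
    exact hbM w (closedBall_subset_ball (by norm_num) hw)
  have b1 : ∀ z ∈ Metric.closedBall (0:ℂ) (3/4 + 1/10), ‖h1 z‖ ≤ M / (1/10) := by
    have := aux_cauchy (f := h) (r := 17/20) (t := 1/10) (by norm_num) (by norm_num) hd hbM'
    intro z hz
    exact this z (Metric.closedBall_subset_closedBall (by norm_num) hz)
  have b2 : ∀ z ∈ Metric.closedBall (0:ℂ) (13/20 + 1/10), ‖h2 z‖ ≤ M / (1/10) / (1/10) := by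
    have := aux_cauchy (f := h1) (r := 3/4) (t := 1/10) (by norm_num) (by norm_num) dOn1 b1
    intro z hz
    exact this z (Metric.closedBall_subset_closedBall (by norm_num) hz)
  have b3 : ∀ z ∈ Metric.closedBall (0:ℂ) (13/20), ‖h3 z‖ ≤ 1000 * M := by
    have := aux_cauchy (f := h2) (r := 13/20) (t := 1/10) (by norm_num) (by norm_num) dOn2 b2
    intro z hz
    calc ‖h3 z‖ ≤ M / (1/10) / (1/10) / (1/10) := this z hz
    _ = 1000 * M := by ring
  -- difference bound for h2
  have b2diff : ∀ w ∈ Metric.closedBall (0:ℂ) (13/20), ‖h2 w - h2 0‖ ≤ 1000 * M * ‖w‖ := by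
    intro w hw
    have h0m : (0:ℂ) ∈ Metric.closedBall (0:ℂ) (13/20) := by
      rw [mem_closedBall_zero_iff]; norm_num
    have := (convex_closedBall (0:ℂ) (13/20)).norm_image_sub_le_of_norm_hasDerivWithin_le
      (f := h2) (f' := h3)
      (fun x hx => ((dAt2 x ((closedBall_subset_ball (by norm_num)) hx)).hasDerivWithinAt))
      (fun x hx => b3 x hx) h0m hw
    simpa using this
  -- evenness consequences
  have hodd : ∀ z ∈ Metric.ball (0:ℂ) 1, h1 (-z) = - h1 z := by
    intro z hz
    have hev : (fun w => h (-w)) =ᶠ[nhds z] h := by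
      filter_upwards [isOpen_ball.mem_nhds hz] with w hw
      exact heven w hw
    have hde := hev.deriv_eq
    rw [deriv_comp_neg] at hde
    rw [hh1]
    linear_combination -hde
  have h1_0 : h1 0 = 0 := by
    have := hodd 0 (mem_ball_self one_pos)
    rw [neg_zero] at this
    linear_combination this / 2
  -- realness of derivatives on the real axis
  have him1 : ∀ x : ℝ, |x| < 1 → (h1 ↑x).im = 0 := aux_real_deriv hd hre
  have him2 : ∀ x : ℝ, |x| < 1 → (h2 ↑x).im = 0 := aux_real_deriv dOn1 him1
  set a : ℝ := (h2 0).re with hadef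
  have ha : δ ≤ a := hsnd
  have h2_0 : h2 0 = (a:ℝ) := by
    apply Complex.ext
    · simp [hadef]
    · rw [Complex.ofReal_im]
      have := him2 0 (by norm_num)
      rwa [Complex.ofReal_zero] at this
  -- the auxiliary function g and its bounds
  set g : ℂ → ℂ := fun z => h z - h 0 - ((a:ℂ)/2) * z^2 with hgdef
  set g1 : ℂ → ℂ := fun z => h1 z - (a:ℂ) * z with hg1def
  have hg1d : ∀ z ∈ Metric.ball (0:ℂ) 1, HasDerivAt g1 (h2 z - (a:ℂ)) z := by
    intro z hz
    have hlin : HasDerivAt (fun z : ℂ => (a:ℂ) * z) (a:ℂ) z := by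
      simpa using (hasDerivAt_id z).const_mul (a:ℂ)
    exact (dAt1 z hz).sub hlin
  have hgd : ∀ z ∈ Metric.ball (0:ℂ) 1, HasDerivAt g (g1 z) z := by
    intro z hz
    have hsq : HasDerivAt (fun z : ℂ => ((a:ℂ)/2) * z^2) (((a:ℂ)/2) * (2*z)) z := by
      simpa using (hasDerivAt_pow 2 z).const_mul ((a:ℂ)/2)
    have := ((dAt z hz).sub_const (h 0)).sub hsq
    convert this using 1
    case e'_4 | e'_5 | e'_8 => rfl
    rw [hg1def]
    ring
  have hball65 : Metric.closedBall (0:ℂ) (13/20) ⊆ Metric.ball (0:ℂ) 1 :=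
    closedBall_subset_ball (by norm_num)
  have hg1b : ∀ w ∈ Metric.closedBall (0:ℂ) (13/20), ‖g1 w‖ ≤ 1000 * M * ‖w‖^2 := by
    intro w hw
    rw [mem_closedBall_zero_iff] at hw
    have hsub : Metric.closedBall (0:ℂ) ‖w‖ ⊆ Metric.closedBall (0:ℂ) (13/20) :=
      Metric.closedBall_subset_closedBall hw
    have h0m : (0:ℂ) ∈ Metric.closedBall (0:ℂ) ‖w‖ := mem_closedBall_self (norm_nonneg w)
    have hwm : w ∈ Metric.closedBall (0:ℂ) ‖w‖ := by
      rw [mem_closedBall_zero_iff]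
    have := (convex_closedBall (0:ℂ) ‖w‖).norm_image_sub_le_of_norm_hasDerivWithin_le
      (f := g1) (f' := fun z => h2 z - (a:ℂ))
      (fun x hx => (hg1d x (hball65 (hsub hx))).hasDerivWithinAt)
      (fun x hx => by
        rw [← h2_0]
        calc ‖h2 x - h2 0‖ ≤ 1000 * M * ‖x‖ := b2diff x (hsub hx)
        _ ≤ 1000 * M * ‖w‖ := by
            rw [mem_closedBall_zero_iff] at hx
            nlinarith [norm_nonneg x]) h0m hwm
    have hg10 : g1 0 = 0 := by simp [hg1def, h1_0]
    rw [hg10, sub_zero, sub_zero] at this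
    calc ‖g1 w‖ ≤ 1000 * M * ‖w‖ * ‖w‖ := this
    _ = 1000 * M * ‖w‖^2 := by ring
  have hgb : ∀ w ∈ Metric.closedBall (0:ℂ) (13/20), ‖g w‖ ≤ 1000 * M * ‖w‖^3 := by
    intro w hw
    rw [mem_closedBall_zero_iff] at hw
    have hsub : Metric.closedBall (0:ℂ) ‖w‖ ⊆ Metric.closedBall (0:ℂ) (13/20) :=
      Metric.closedBall_subset_closedBall hw
    have h0m : (0:ℂ) ∈ Metric.closedBall (0:ℂ) ‖w‖ := mem_closedBall_self (norm_nonneg w)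
    have hwm : w ∈ Metric.closedBall (0:ℂ) ‖w‖ := by
      rw [mem_closedBall_zero_iff]
    have := (convex_closedBall (0:ℂ) ‖w‖).norm_image_sub_le_of_norm_hasDerivWithin_le
      (f := g) (f' := g1)
      (fun x hx => (hgd x (hball65 (hsub hx))).hasDerivWithinAt)
      (fun x hx => by
        calc ‖g1 x‖ ≤ 1000 * M * ‖x‖^2 := hg1b x (hsub hx)
        _ ≤ 1000 * M * ‖w‖^2 := by
            rw [mem_closedBall_zero_iff] at hx
            have hxw : ‖x‖^2 ≤ ‖w‖^2 := by nlinarith [norm_nonneg x]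
            nlinarith [hxw, hM.le]) h0m hwm
    have hg0 : g 0 = 0 := by simp [hgdef]
    rw [hg0, sub_zero, sub_zero] at this
    calc ‖g w‖ ≤ 1000 * M * ‖w‖^2 * ‖w‖ := this
    _ = 1000 * M * ‖w‖^3 := by ring
  -- real axis: second derivative lower bound near 0
  have hmemball1 : ∀ x : ℝ, |x| < 1 → (x:ℂ) ∈ Metric.ball (0:ℂ) 1 := by
    intro x hx
    rw [mem_ball_zero_iff, Complex.norm_real, Real.norm_eq_abs]
    exact hx
  have hρ4lt1 : ρ / 4 < 1 := by linarith
  have hF2 : ∀ x : ℝ, |x| ≤ ρ/4 → δ/2 ≤ (h2 ↑x).re := by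
    intro x hx
    have hmem : (x:ℂ) ∈ Metric.closedBall (0:ℂ) (13/20) := by
      rw [mem_closedBall_zero_iff, Complex.norm_real, Real.norm_eq_abs]
      linarith [abs_nonneg x]
    have hb := b2diff _ hmem
    have hre2 : |(h2 ↑x - h2 0).re| ≤ ‖h2 ↑x - h2 0‖ := by
      exact Complex.abs_re_le_norm _
    have hnx : ‖(x:ℂ)‖ = |x| := by rw [Complex.norm_real, Real.norm_eq_abs]
    rw [hnx] at hb
    have hsubre : (h2 ↑x - h2 0).re = (h2 ↑x).re - a := by
      rw [Complex.sub_re, hadef]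
    have habs : |x| ≤ ρ/4 := hx
    have hMρ : 1000 * M * (ρ/4) = δ / 32 := by linarith [hρM]
    have h1000 : 1000 * M * |x| ≤ δ / 32 := by
      nlinarith [abs_nonneg x, hM.le]
    rw [hsubre] at hre2
    have := abs_le.mp hre2
    linarith [this.1]
  -- monotonicity estimates
  have dIoo : ∀ x : ℝ, |x| < 1 → HasDerivAt (fun t : ℝ => (h ↑t).re) ((h1 ↑x).re) x :=
    fun x hx => (dAt ↑x (hmemball1 x hx)).real_of_complex
  have dIoo1 : ∀ x : ℝ, |x| < 1 → HasDerivAt (fun t : ℝ => (h1 ↑t).re) ((h2 ↑x).re) x :=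
    fun x hx => (dAt1 ↑x (hmemball1 x hx)).real_of_complex
  have habsI : ∀ x : ℝ, x ∈ Icc (0:ℝ) (ρ/4) → |x| < 1 := by
    intro x hx
    rw [abs_lt]
    constructor <;> [linarith [hx.1]; linarith [hx.2]]
  -- u := F1 - δ/2 x is monotone on [0, ρ/4]
  have key1 : ∀ x ∈ Icc (0:ℝ) (ρ/4), δ/2 * x ≤ (h1 ↑x).re := by
    have hu : ∀ x : ℝ, |x| < 1 →
        HasDerivAt (fun t : ℝ => (h1 ↑t).re - δ/2 * t) ((h2 ↑x).re - δ/2) x := by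
      intro x hx
      have hlin : HasDerivAt (fun t : ℝ => δ/2 * t) (δ/2) x := by
        simpa using (hasDerivAt_id x).const_mul (δ/2)
      exact (dIoo1 x hx).sub hlin
    have hmono : MonotoneOn (fun t : ℝ => (h1 ↑t).re - δ/2 * t) (Icc 0 (ρ/4)) := by
      apply monotoneOn_of_deriv_nonneg (convex_Icc _ _)
      · intro x hx
        exact (hu x (habsI x hx)).continuousAt.continuousWithinAt
      · intro x hx
        rw [interior_Icc] at hx
        exact (hu x (habsI x (Ioo_subset_Icc_self hx))).differentiableAt.differentiableWithinAt
      · intro x hx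
        rw [interior_Icc] at hx
        rw [(hu x (habsI x (Ioo_subset_Icc_self hx))).deriv]
        have := hF2 x (by rw [_root_.abs_of_nonneg hx.1.le]; exact hx.2.le)
        linarith
    intro x hx
    have h0I : (0:ℝ) ∈ Icc (0:ℝ) (ρ/4) := ⟨le_refl _, by linarith⟩
    have := hmono h0I hx hx.1
    have hz : ((0:ℝ):ℂ) = 0 := Complex.ofReal_zero
    simp only [hz, h1_0, Complex.zero_re] at this
    linarith
  -- v := F - δ/4 x² is monotone on [0, ρ/4]
  have key2 : ∀ x ∈ Icc (0:ℝ) (ρ/4), (h 0).re + δ/4 * x^2 ≤ (h ↑x).re := by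
    have hv : ∀ x : ℝ, |x| < 1 →
        HasDerivAt (fun t : ℝ => (h ↑t).re - δ/4 * t^2) ((h1 ↑x).re - δ/4 * (2*x)) x := by
      intro x hx
      have hsq : HasDerivAt (fun t : ℝ => δ/4 * t^2) (δ/4 * (2*x)) x := by
        simpa using (hasDerivAt_pow 2 x).const_mul (δ/4)
      exact (dIoo x hx).sub hsq
    have hmono : MonotoneOn (fun t : ℝ => (h ↑t).re - δ/4 * t^2) (Icc 0 (ρ/4)) := by
      apply monotoneOn_of_deriv_nonneg (convex_Icc _ _)
      · intro x hx
        exact (hv x (habsI x hx)).continuousAt.continuousWithinAt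
      · intro x hx
        rw [interior_Icc] at hx
        exact (hv x (habsI x (Ioo_subset_Icc_self hx))).differentiableAt.differentiableWithinAt
      · intro x hx
        rw [interior_Icc] at hx
        rw [(hv x (habsI x (Ioo_subset_Icc_self hx))).deriv]
        have := key1 x (Ioo_subset_Icc_self hx)
        linarith
    intro x hx
    have h0I : (0:ℝ) ∈ Icc (0:ℝ) (ρ/4) := ⟨le_refl _, by linarith⟩
    have := hmono h0I hx hx.1
    have hz : ((0:ℝ):ℂ) = 0 := Complex.ofReal_zero
    simp only [hz] at this
    nlinarith [this]
  -- IVT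
  have hFρ4 : 0 < (h ↑(ρ/4)).re := by
    have := key2 (ρ/4) ⟨by linarith, le_refl _⟩
    linarith [hclow]
  have hF0 : (h ↑(0:ℝ)).re < 0 := by
    rw [Complex.ofReal_zero]; exact hchigh
  have hcont : ContinuousOn (fun t : ℝ => (h ↑t).re) (Icc 0 (ρ/4)) := by
    intro x hx
    exact (dIoo x (habsI x hx)).continuousAt.continuousWithinAt
  obtain ⟨εc, hεmem, hεzero⟩ :=
    intermediate_value_Ioo (by linarith : (0:ℝ) ≤ ρ/4) hcont ⟨hF0, hFρ4⟩
  have hεzero' : (h ↑εc).re = 0 := hεzero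
  have hεpos : 0 < εc := hεmem.1
  have hεlt : εc < ρ/4 := hεmem.2
  have hεabs1 : |εc| < 1 := by rw [abs_of_pos hεpos]; linarith
  have hεballC : (εc:ℂ) ∈ Metric.ball (0:ℂ) 1 := hmemball1 εc hεabs1
  have hεzeroC : h ↑εc = 0 := by
    apply Complex.ext
    · rw [hεzero', Complex.zero_re]
    · rw [Complex.zero_im]; exact hre εc hεabs1
  -- εc² ≤ (4/δ)|h 0|
  have habsh0 : ‖h 0‖ = -(h 0).re := by
    have h0r : h 0 = (((h 0).re : ℝ) : ℂ) := by
      apply Complex.ext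
      · rw [Complex.ofReal_re]
      · rw [Complex.ofReal_im]
        have := hre 0 (by norm_num)
        rwa [Complex.ofReal_zero] at this
    rw [h0r]
    rw [Complex.norm_real, Real.norm_eq_abs, Complex.ofReal_re]
    rw [abs_of_neg hchigh]
  have hεsq : εc ^ 2 ≤ 4/δ * ‖h 0‖ := by
    have := key2 εc ⟨hεpos.le, hεlt.le⟩
    rw [hεzero'] at this
    rw [habsh0]
    rw [div_mul_eq_mul_div, le_div_iff₀ hδ]
    linarith [this]
  -- setup for m
  have hεltρ : εc < ρ := by linarith
  have hεne : (εc:ℂ) ≠ 0 := by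
    rw [Ne, Complex.ofReal_eq_zero]; exact hεpos.ne'
  have hne2 : (εc:ℂ) ≠ -(εc:ℂ) := by
    intro H
    rw [← Complex.ofReal_neg, Complex.ofReal_inj] at H
    linarith
  have h2εne : (2*(εc:ℂ)) ≠ 0 := mul_ne_zero two_ne_zero hεne
  set P : ℂ := h1 ↑εc / (2*↑εc) with hPdef
  set m : ℂ → ℂ := fun z => if z = ↑εc ∨ z = (-(εc:ℂ)) then P else h z / (z^2 - (εc:ℂ)^2) with hmdef
  have hmP1 : m ↑εc = P := if_pos (Or.inl rfl)
  have hmP2 : m ((-(εc:ℂ))) = P := if_pos (Or.inr rfl)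
  have hdenne : ∀ z : ℂ, z ≠ ↑εc → z ≠ (-(εc:ℂ)) → z^2 - (εc:ℂ)^2 ≠ 0 := by
    intro z hz1 hz2 H
    have hsplit : (z - ↑εc) * (z + ↑εc) = 0 := by linear_combination H
    rcases mul_eq_zero.mp hsplit with h' | h'
    · exact hz1 (sub_eq_zero.mp h')
    · exact hz2 (by linear_combination h')
  have hmval : ∀ z : ℂ, z ≠ ↑εc → z ≠ (-(εc:ℂ)) → m z = h z / (z^2 - (εc:ℂ)^2) := by
    intro z hz1 hz2
    rw [hmdef]
    exact if_neg (by push_neg; exact ⟨hz1, hz2⟩)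
  have hεzeroC' : h (-(εc:ℂ)) = 0 := by
    rw [heven ↑εc hεballC]; exact hεzeroC
  have hballρ1 : Metric.ball (0:ℂ) ρ ⊆ Metric.ball (0:ℂ) 1 :=
    ball_subset_ball (by linarith)
  have hmemρ : (↑εc:ℂ) ∈ Metric.ball (0:ℂ) ρ := by
    rw [mem_ball_zero_iff, Complex.norm_real, Real.norm_eq_abs, _root_.abs_of_pos hεpos]
    linarith
  have hmemρ' : -(↑εc:ℂ) ∈ Metric.ball (0:ℂ) ρ := by
    rw [mem_ball_zero_iff, norm_neg, Complex.norm_real, Real.norm_eq_abs,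
      _root_.abs_of_pos hεpos]
    linarith
  -- factorization
  have hfac : ∀ z ∈ Metric.ball (0:ℂ) ρ, h z = m z * (z^2 - (εc:ℂ)^2) := by
    intro z _
    by_cases hz1 : z = ↑εc
    · subst hz1
      rw [hεzeroC, sub_self, mul_zero]
    by_cases hz2 : z = (-(εc:ℂ))
    · subst hz2
      have hzz : ((-(εc:ℂ)))^2 - (εc:ℂ)^2 = 0 := by ring
      rw [hzz, mul_zero, hεzeroC']
    · rw [hmval z hz1 hz2, div_mul_cancel₀ _ (hdenne z hz1 hz2)]
  -- differentiability of m away from ±εc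
  have hmd_off : DifferentiableOn ℂ m ((Metric.ball (0:ℂ) ρ \ {(-(εc:ℂ))}) \ {↑εc}) := by
    have hsubset : ((Metric.ball (0:ℂ) ρ \ {(-(εc:ℂ))}) \ {↑εc}) ⊆ Metric.ball (0:ℂ) 1 :=
      (diff_subset.trans diff_subset).trans hballρ1
    have hdq : DifferentiableOn ℂ (fun z => h z / (z^2 - (εc:ℂ)^2))
        ((Metric.ball (0:ℂ) ρ \ {(-(εc:ℂ))}) \ {↑εc}) := by
      apply DifferentiableOn.div
      · exact hd.mono hsubset
      · exact ((differentiable_pow 2).sub_const _).differentiableOn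
      · intro z hz
        exact hdenne z (by simpa using hz.2) (by simpa using hz.1.2)
    apply hdq.congr
    intro z hz
    exact hmval z (by simpa using hz.2) (by simpa using hz.1.2)
  -- continuity of m at εc
  have hcontε : ContinuousAt m ↑εc := by
    have hslope : Tendsto (slope h ↑εc) (𝓝[≠] (↑εc:ℂ)) (nhds (h1 ↑εc)) :=
      hasDerivAt_iff_tendsto_slope.mp (dAt ↑εc hεballC)
    have hsum : ((εc:ℂ) + ↑εc) = 2*↑εc := by ring
    have hinv : Tendsto (fun z : ℂ => (z + ↑εc)⁻¹) (𝓝[≠] (↑εc:ℂ)) (nhds ((2*(εc:ℂ))⁻¹)) := by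
      have h0 : Tendsto (fun z : ℂ => z + ↑εc) (nhds (↑εc:ℂ)) (nhds ((εc:ℂ) + ↑εc)) :=
        (continuous_id.add continuous_const).tendsto _
      rw [hsum] at h0
      exact (h0.inv₀ h2εne).mono_left nhdsWithin_le_nhds
    have hmulT := hslope.mul hinv
    have hPeq : h1 ↑εc * (2*(εc:ℂ))⁻¹ = P := by rw [hPdef, div_eq_mul_inv]
    rw [hPeq] at hmulT
    have hev : (fun z => slope h ↑εc z * (z + ↑εc)⁻¹) =ᶠ[𝓝[≠] (↑εc:ℂ)] m := by
      have hne' : {z : ℂ | z ≠ (-(εc:ℂ))} ∈ 𝓝[≠] (↑εc:ℂ) :=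
        mem_nhdsWithin_of_mem_nhds (isOpen_ne.mem_nhds hne2)
      filter_upwards [hne', self_mem_nhdsWithin] with z hza hzb
      have hzb' : z ≠ ↑εc := hzb
      rw [hmval z hzb' hza, slope_def_field, hεzeroC, sub_zero,
        show z^2-(εc:ℂ)^2 = (z - ↑εc)*(z + ↑εc) by ring, ← div_eq_mul_inv, div_div]
    have hT : Tendsto m (𝓝[≠] (↑εc:ℂ)) (nhds P) := hmulT.congr' hev
    rw [ContinuousAt, hmP1, ← nhdsNE_sup_pure, tendsto_sup]
    refine ⟨hT, ?_⟩
    have := tendsto_pure_nhds m (↑εc:ℂ)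
    rwa [hmP1] at this
  -- continuity of m at -εc
  have hcontε' : ContinuousAt m ((-(εc:ℂ))) := by
    have hballC' : (-(εc:ℂ)) ∈ Metric.ball (0:ℂ) 1 := hballρ1 hmemρ'
    have hslope : Tendsto (slope h ((-(εc:ℂ)))) (𝓝[≠] (-(εc:ℂ))) (nhds (h1 ((-(εc:ℂ))))) :=
      hasDerivAt_iff_tendsto_slope.mp (dAt ((-(εc:ℂ))) hballC')
    have hodd' : h1 ((-(εc:ℂ))) = -h1 ↑εc := hodd ↑εc hεballC
    rw [hodd'] at hslope
    have hsum : ((-(εc:ℂ)) - ↑εc) = -(2*↑εc) := by ring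
    have hinv : Tendsto (fun z : ℂ => (z - ↑εc)⁻¹) (𝓝[≠] (-(εc:ℂ)))
        (nhds ((-(2*(εc:ℂ)))⁻¹)) := by
      have h0 : Tendsto (fun z : ℂ => z - ↑εc) (nhds (-(εc:ℂ))) (nhds ((-(εc:ℂ)) - ↑εc)) :=
        (continuous_id.sub continuous_const).tendsto _
      rw [hsum] at h0
      exact (h0.inv₀ (neg_ne_zero.mpr h2εne)).mono_left nhdsWithin_le_nhds
    have hmulT := hslope.mul hinv
    have hPeq : -h1 ↑εc * (-(2*(εc:ℂ)))⁻¹ = P := by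
      rw [hPdef, div_eq_mul_inv]
      rw [show (-(2*(εc:ℂ)))⁻¹ = -(2*(εc:ℂ))⁻¹ by rw [neg_inv]]
      ring
    rw [hPeq] at hmulT
    have hev : (fun z => slope h ((-(εc:ℂ))) z * (z - ↑εc)⁻¹) =ᶠ[𝓝[≠] (-(εc:ℂ))] m := by
      have hne' : {z : ℂ | z ≠ ↑εc} ∈ 𝓝[≠] (-(εc:ℂ)) :=
        mem_nhdsWithin_of_mem_nhds (isOpen_ne.mem_nhds (Ne.symm hne2))
      filter_upwards [hne', self_mem_nhdsWithin] with z hza hzb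
      have hzb' : z ≠ (-(εc:ℂ)) := hzb
      rw [hmval z hza hzb', slope_def_field, hεzeroC', sub_zero,
        show z^2-(εc:ℂ)^2 = (z - (-(εc:ℂ)))*(z - ↑εc) by ring, ← div_eq_mul_inv, div_div]
    have hT : Tendsto m (𝓝[≠] (-(εc:ℂ))) (nhds P) := hmulT.congr' hev
    rw [ContinuousAt, hmP2, ← nhdsNE_sup_pure, tendsto_sup]
    refine ⟨hT, ?_⟩
    have := tendsto_pure_nhds m (-(εc:ℂ))
    rwa [hmP2] at this
  -- m is differentiable on the ball
  have hstep1 : DifferentiableOn ℂ m (Metric.ball (0:ℂ) ρ \ {(-(εc:ℂ))}) := by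
    refine (Complex.differentiableOn_compl_singleton_and_continuousAt_iff ?_).mp
      ⟨hmd_off, hcontε⟩
    exact (isOpen_ball.sdiff isClosed_singleton).mem_nhds ⟨hmemρ, by simpa using hne2⟩
  have mdiff : DifferentiableOn ℂ m (Metric.ball (0:ℂ) ρ) :=
    (Complex.differentiableOn_compl_singleton_and_continuousAt_iff
      (isOpen_ball.mem_nhds hmemρ')).mp ⟨hstep1, hcontε'⟩
  -- helper: complex numbers with zero imaginary part are real
  have hofreal : ∀ w : ℂ, w.im = 0 → w = ((w.re : ℝ) : ℂ) := fun w hw =>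
    Complex.ext (Complex.ofReal_re _).symm (by rw [Complex.ofReal_im, hw])
  have haC : ((a:ℂ))/2 = ((a/2 : ℝ) : ℂ) := by push_cast; ring
  -- uniform bound on m - a/2 via the maximum principle
  have hbound : ∀ z ∈ Metric.ball (0:ℂ) ρ, ‖m z - (a:ℂ)/2‖ ≤ 3/16 * δ := by
    intro z hz
    rw [mem_ball_zero_iff] at hz
    set r : ℝ := max ‖z‖ (ρ/2) with hrdef
    have hr0 : 0 < r := lt_of_lt_of_le (by positivity) (le_max_right _ _)
    have hrρ : r < ρ := max_lt hz (by linarith)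
    have hρ2r : ρ/2 ≤ r := le_max_right _ _
    have hεr2 : εc ≤ r/2 := by linarith
    have hcb : Metric.closedBall (0:ℂ) r ⊆ Metric.ball (0:ℂ) ρ := closedBall_subset_ball hrρ
    have hq : DiffContOnCl ℂ (fun w => m w - (a:ℂ)/2) (Metric.ball (0:ℂ) r) := by
      apply DifferentiableOn.diffContOnCl
      rw [closure_ball (0:ℂ) hr0.ne']
      exact (mdiff.mono hcb).sub (differentiableOn_const _)
    have hfr : ∀ w ∈ frontier (Metric.ball (0:ℂ) r), ‖m w - (a:ℂ)/2‖ ≤ 3/16 * δ := by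
      intro w hw
      rw [frontier_ball (0:ℂ) hr0.ne'] at hw
      have hwn : ‖w‖ = r := mem_sphere_zero_iff_norm.mp hw
      have hw1 : w ≠ ↑εc := by
        intro H
        rw [H, Complex.norm_real, Real.norm_eq_abs, _root_.abs_of_pos hεpos] at hwn
        linarith
      have hw2 : w ≠ (-(εc:ℂ)) := by
        intro H
        rw [H, norm_neg, Complex.norm_real, Real.norm_eq_abs, _root_.abs_of_pos hεpos] at hwn
        linarith
      have hden := hdenne w hw1 hw2
      have hnum : h w - (a:ℂ)/2 * (w^2 - (εc:ℂ)^2) = g w - g ↑εc := by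
        simp only [hgdef]
        linear_combination hεzeroC
      have hquot : m w - (a:ℂ)/2 = (g w - g ↑εc) / (w^2 - (εc:ℂ)^2) := by
        rw [hmval w hw1 hw2, ← hnum]
        field_simp
      rw [hquot, norm_div]
      have hgw := hgb w (by rw [mem_closedBall_zero_iff, hwn]; linarith)
      have hgε := hgb ↑εc (by
        rw [mem_closedBall_zero_iff, Complex.norm_real, Real.norm_eq_abs,
          _root_.abs_of_pos hεpos]
        linarith)
      rw [hwn] at hgw
      rw [Complex.norm_real, Real.norm_eq_abs, _root_.abs_of_pos hεpos] at hgε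
      have hcube : εc^3 ≤ (r/2)^3 := pow_le_pow_left₀ hεpos.le hεr2 3
      have hnum_le : ‖g w - g ↑εc‖ ≤ 1125 * M * r^3 := by
        have htri : ‖g w - g ↑εc‖ ≤ ‖g w‖ + ‖g ↑εc‖ := norm_sub_le _ _
        nlinarith [hM.le]
      have hden_ge : (3/4) * r^2 ≤ ‖w^2 - (εc:ℂ)^2‖ := by
        have htri : ‖(w:ℂ)^2‖ - ‖((εc:ℂ))^2‖ ≤ ‖w^2 - (εc:ℂ)^2‖ := norm_sub_norm_le _ _
        rw [norm_pow, norm_pow, hwn, Complex.norm_real, Real.norm_eq_abs,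
          _root_.abs_of_pos hεpos] at htri
        nlinarith [hεpos.le]
      calc ‖g w - g ↑εc‖ / ‖w^2 - (εc:ℂ)^2‖ ≤ (1125*M*r^3) / ((3/4)*r^2) :=
            div_le_div₀ (by positivity) hnum_le (by positivity) hden_ge
      _ = 1500 * M * r := by field_simp; ring
      _ ≤ 3/16 * δ := by
          have h1500 : 1500 * M * r ≤ 1500 * M * ρ :=
            mul_le_mul_of_nonneg_left hrρ.le (by positivity)
          linarith [hρM]
    have hzmem : z ∈ closure (Metric.ball (0:ℂ) r) := by
      rw [closure_ball (0:ℂ) hr0.ne', mem_closedBall_zero_iff]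
      exact le_max_left _ _
    exact Complex.norm_le_of_forall_mem_frontier_norm_le isBounded_ball hq hfr hzmem
  have hanorm : ‖((a:ℂ))/2‖ = a/2 := by
    rw [haC, Complex.norm_real, Real.norm_eq_abs, _root_.abs_of_pos (by linarith : (0:ℝ) < a/2)]
  -- m never vanishes on the ball
  have hmne : ∀ z ∈ Metric.ball (0:ℂ) ρ, m z ≠ 0 := by
    intro z hz H
    have hb := hbound z hz
    rw [H, zero_sub, norm_neg, hanorm] at hb
    linarith
  -- realness and positivity on the real axis
  have hmpos : ∀ x : ℝ, |x| < ρ → (m ↑x).im = 0 ∧ 0 < (m ↑x).re := by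
    intro x hx
    have hxρ : (x:ℂ) ∈ Metric.ball (0:ℂ) ρ := by
      rw [mem_ball_zero_iff, Complex.norm_real, Real.norm_eq_abs]; exact hx
    constructor
    · by_cases hc1 : (x:ℂ) = ↑εc ∨ (x:ℂ) = (-(εc:ℂ))
      · have hmx : m ↑x = P := by rw [hmdef]; exact if_pos hc1
        rw [hmx, hPdef, hofreal (h1 ↑εc) (him1 εc hεabs1),
          show (2*(εc:ℂ)) = ((2*εc : ℝ):ℂ) by push_cast; ring,
          ← Complex.ofReal_div, Complex.ofReal_im]
      · push_neg at hc1
        rw [hmval _ hc1.1 hc1.2, hofreal (h ↑x) (hre x (by linarith [hρle, abs_nonneg x] : |x| < 1)),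
          show ((x:ℂ)^2 - (εc:ℂ)^2) = ((x^2 - εc^2 : ℝ):ℂ) by push_cast; ring,
          ← Complex.ofReal_div, Complex.ofReal_im]
    · have hb := hbound _ hxρ
      have habs := Complex.abs_re_le_norm (m ↑x - (a:ℂ)/2)
      have hrepart : (m ↑x - (a:ℂ)/2).re = (m ↑x).re - a/2 := by
        rw [haC, Complex.sub_re, Complex.ofReal_re]
      rw [hrepart] at habs
      have := abs_le.mp habs
      linarith [this.1]
  -- characterization of zeros
  have hzeros : ∀ z ∈ Metric.ball (0:ℂ) ρ, (h z = 0 ↔ z = ↑εc ∨ z = (-(εc:ℂ))) := by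
    intro z hz
    rw [hfac z hz]
    constructor
    · intro H
      rcases mul_eq_zero.mp H with H' | H'
      · exact absurd H' (hmne z hz)
      · have hsplit : (z - ↑εc) * (z + ↑εc) = 0 := by linear_combination H'
        rcases mul_eq_zero.mp hsplit with H'' | H''
        · exact Or.inl (sub_eq_zero.mp H'')
        · exact Or.inr (by linear_combination H'')
    · rintro (rfl | rfl)
      · rw [sub_self, mul_zero]
      · rw [show ((-(εc:ℂ)))^2 - (εc:ℂ)^2 = 0 by ring, mul_zero]
  -- nonvanishing of the derivative at ±εc
  have hev : h =ᶠ[nhds (↑εc:ℂ)] (fun z => m z * (z^2 - (εc:ℂ)^2)) := by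
    filter_upwards [isOpen_ball.mem_nhds hmemρ] with w hw
    exact hfac w hw
  have hev' : h =ᶠ[nhds (-(εc:ℂ))] (fun z => m z * (z^2 - (εc:ℂ)^2)) := by
    filter_upwards [isOpen_ball.mem_nhds hmemρ'] with w hw
    exact hfac w hw
  have hderiv1 : deriv h ↑εc ≠ 0 := by
    have hdm : HasDerivAt m (deriv m ↑εc) ↑εc :=
      (mdiff.differentiableAt (isOpen_ball.mem_nhds hmemρ)).hasDerivAt
    have hdq : HasDerivAt (fun z : ℂ => z^2 - (εc:ℂ)^2) (2*↑εc) ↑εc := by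
      simpa using (hasDerivAt_pow 2 ((εc:ℂ))).sub_const ((εc:ℂ)^2)
    have hprod := hdm.mul hdq
    rw [hev.deriv_eq, show (fun z => m z * (z^2 - (εc:ℂ)^2)) = m * (fun z => z^2 - (εc:ℂ)^2) from rfl, hprod.deriv]
    simp only [sub_self, mul_zero, zero_add]
    exact mul_ne_zero (hmne _ hmemρ) h2εne
  have hderiv2 : deriv h (-(εc:ℂ)) ≠ 0 := by
    have hdm : HasDerivAt m (deriv m (-(εc:ℂ))) (-(εc:ℂ)) :=
      (mdiff.differentiableAt (isOpen_ball.mem_nhds hmemρ')).hasDerivAt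
    have hdq : HasDerivAt (fun z : ℂ => z^2 - (εc:ℂ)^2) (2*(-(εc:ℂ))) (-(εc:ℂ)) := by
      simpa using (hasDerivAt_pow 2 (-(εc:ℂ))).sub_const ((εc:ℂ)^2)
    have hprod := hdm.mul hdq
    rw [hev'.deriv_eq, show (fun z => m z * (z^2 - (εc:ℂ)^2)) = m * (fun z => z^2 - (εc:ℂ)^2) from rfl, hprod.deriv]
    have hzz : ((-(εc:ℂ)))^2 - (εc:ℂ)^2 = 0 := by ring
    rw [hzz, mul_zero, zero_add]
    refine mul_ne_zero (hmne _ hmemρ') ?_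
    intro H
    exact h2εne (by linear_combination -H)
  exact ⟨εc, hεpos, hεltρ, hεsq, m, mdiff, hmpos, hfac, hzeros, hderiv1, hderiv2⟩
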